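/- arXiv:1211.1834 — 3 statements merged into one kernel-verified Lean document; each statement's English description precedes it below -/
import Mathlib

section
/- (A priori estimates for the regularized corrector.) For every μ > 0: E[|Dφ_μ|²] ≤ β²|ξ|²/α² and μ E[φ_μ²] ≤ β²|ξ|²/α; in particular E[|Dφ_μ|²] is bounded uniformly in μ and E[φ_μ²] ≤ C μ^{−1} with C = β²|ξ|²/α. -/
set_option maxHeartbeats 1000000
set_option synthInstance.maxHeartbeats 200000


open MeasureTheory

namespace StochHom

/-- Edges of `ℤ^d`, indexed by their base vertex and their direction:
the pair `(x, i)` represents the edge `(x, x + eᵢ)`. -/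
abbrev Edge (d : ℕ) := (Fin d → ℤ) × Fin d

/-- Environments: conductance functions `ω : 𝔹 → ℝ` (with values in `[α,β]`). -/
abbrev Env (d : ℕ) := Edge d → ℝ

/-- The coordinate unit vector `eᵢ` of `ℤ^d`. -/
def unit {d : ℕ} (i : Fin d) : Fin d → ℤ := Pi.single i 1

/-- The shift `θ_z` of the environment: `(θ_z ω)_{(x,y)} = ω_{(x+z,y+z)}`. -/
def shift {d : ℕ} (z : Fin d → ℤ) (ω : Env d) : Env d :=
  fun e => ω (e.1 + z, e.2)

/-- Forward difference `Dᵢψ(ω) = ψ(θ_{eᵢ}ω) − ψ(ω)`. -/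
def Dgrad {d : ℕ} (ψ : Env d → ℝ) (i : Fin d) (ω : Env d) : ℝ :=
  ψ (shift (unit i) ω) - ψ ω

/-- Backward difference `Dᵢ*ψ(ω) = ψ(ω) − ψ(θ_{−eᵢ}ω)`. -/
def DgradStar {d : ℕ} (ψ : Env d → ℝ) (i : Fin d) (ω : Env d) : ℝ :=
  ψ ω - ψ (shift (-unit i) ω)

/-- The operator `𝓛ψ(ω) = Σ_{z∼0} ω_{(0,z)} (ψ(ω) − ψ(θ_z ω))`, the sum running over the
`2d` nearest neighbors `z` of `0` in `ℤ^d`.  The conductance of the edge `(0, eᵢ)` is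
`ω (0, i)` and that of the edge `(0, −eᵢ)` is `ω (−eᵢ, i)`. -/
def genL {d : ℕ} (ψ : Env d → ℝ) (ω : Env d) : ℝ :=
  ∑ i : Fin d,
    (ω (0, i) * (ψ ω - ψ (shift (unit i) ω))
      + ω (-unit i, i) * (ψ ω - ψ (shift (-unit i) ω)))

/-- The local drift `𝔡(ω) = Σ_{z∼0} ω_{(0,z)} (ξ·z)` in the direction `ξ`. -/
def drift {d : ℕ} (ξ : Fin d → ℝ) (ω : Env d) : ℝ :=
  ∑ i : Fin d, (ω (0, i) * ξ i + ω (-unit i, i) * (-ξ i))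

/- ------------------ auxiliary lemmas ------------------ -/

lemma shift_shift {d : ℕ} (z w : Fin d → ℤ) (ω : Env d) :
    shift z (shift w ω) = shift (w + z) ω := by
  funext e
  show ω (e.1 + z + w, e.2) = ω (e.1 + (w + z), e.2)
  rw [add_assoc, add_comm z w]

lemma shift_zero {d : ℕ} (ω : Env d) : shift (0 : Fin d → ℤ) ω = ω := by
  funext e; simp [shift]

lemma measurable_shift {d : ℕ} (z : Fin d → ℤ) : Measurable (shift (d := d) z) :=
  measurable_pi_lambda _ fun e => measurable_pi_apply _

/-- The shift as a measurable equivalence. -/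
def shiftEquiv {d : ℕ} (z : Fin d → ℤ) : Env d ≃ᵐ Env d where
  toFun := shift z
  invFun := shift (-z)
  left_inv ω := by rw [shift_shift]; simp [shift_zero]
  right_inv ω := by rw [shift_shift]; simp [shift_zero]
  measurable_toFun := measurable_shift z
  measurable_invFun := measurable_shift (-z)

lemma integral_shift {d : ℕ} (P : Measure (Env d))
    (hshift : ∀ z : Fin d → ℤ, MeasurePreserving (shift z) P P)
    (z : Fin d → ℤ) (F : Env d → ℝ) :
    ∫ ω, F (shift z ω) ∂P = ∫ ω, F ω ∂P :=
  MeasurePreserving.integral_comp (hshift z) (shiftEquiv z).measurableEmbedding F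

lemma memLp_mul_integrable {d : ℕ} {P : Measure (Env d)} {f g : Env d → ℝ}
    (hf : MemLp f 2 P) (hg : MemLp g 2 P) :
    Integrable (fun ω => f ω * g ω) P := by
  have h : MemLp (f • g) 1 P := MemLp.smul hg hf
  exact memLp_one_iff_integrable.mp h

/-- a priori estimates for the regularized corrector: for every `μ > 0`,
`E[|Dφ_μ|²] ≤ β²|ξ|²/α²` and `μ E[φ_μ²] ≤ β²|ξ|²/α`. -/
theorem statement4 {d : ℕ} (hd : 1 ≤ d) {α β : ℝ} (hα : 0 < α) (hαβ : α ≤ β)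
    (P : Measure (Env d)) [IsProbabilityMeasure P]
    (hsupp : ∀ᵐ ω ∂P, ∀ e, ω e ∈ Set.Icc α β)
    (hshift : ∀ z : Fin d → ℤ, MeasurePreserving (shift z) P P)
    (ξ : Fin d → ℝ) (μ : ℝ) (hμ : 0 < μ)
    (φμ : Env d → ℝ) (hφ : MemLp φμ 2 P)
    (heq : ∀ᵐ ω ∂P, μ * φμ ω + genL φμ ω = drift ξ ω) :
    (∫ ω, ∑ i : Fin d, (Dgrad φμ i ω) ^ 2 ∂P ≤ β ^ 2 * (∑ i, ξ i ^ 2) / α ^ 2) ∧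
    μ * ∫ ω, φμ ω ^ 2 ∂P ≤ β ^ 2 * (∑ i, ξ i ^ 2) / α := by
  classical
  have hβ0 : (0:ℝ) ≤ β := le_trans hα.le hαβ
  have hE0 : (0:ℝ) ≤ ∑ i, ξ i ^ 2 := Finset.sum_nonneg fun i _ => sq_nonneg _
  -- boundedness facts
  have hbdd : ∀ e : Edge d, ∀ᵐ ω ∂P, ‖ω e‖ ≤ β := by
    intro e
    filter_upwards [hsupp] with ω hω
    have h := hω e
    rw [Real.norm_eq_abs, abs_le]
    exact ⟨by linarith [h.1], h.2⟩
  have hmeas : ∀ e : Edge d, AEStronglyMeasurable (fun ω : Env d => ω e) P :=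
    fun e => (measurable_pi_apply e).aestronglyMeasurable
  have hbmul : ∀ (e : Edge d) (f : Env d → ℝ), Integrable f P →
      Integrable (fun ω => ω e * f ω) P :=
    fun e f hf => hf.bdd_mul (hmeas e) (hbdd e)
  have hAconst : ∀ e : Edge d, Integrable (fun ω : Env d => ω e) P :=
    fun e => Integrable.mono' (integrable_const β) (hmeas e) (hbdd e)
  -- ℒᵖ facts about the shifted corrector
  have hps : ∀ i : Fin d, MemLp (fun ω => φμ (shift (unit i) ω)) 2 P :=
    fun i => hφ.comp_measurePreserving (hshift (unit i))
  have hms : ∀ i : Fin d, MemLp (fun ω => φμ (shift (-unit i) ω)) 2 P :=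
    fun i => hφ.comp_measurePreserving (hshift (-unit i))
  have hφ2 : Integrable (fun ω => φμ ω ^ 2) P := hφ.integrable_sq
  have hD : ∀ i : Fin d, MemLp (Dgrad φμ i) 2 P := fun i => (hps i).sub hφ
  have hD2 : ∀ i : Fin d, Integrable (fun ω => (Dgrad φμ i ω) ^ 2) P :=
    fun i => (hD i).integrable_sq
  have hAD2 : ∀ i : Fin d, Integrable (fun ω => ω (0, i) * (Dgrad φμ i ω) ^ 2) P :=
    fun i => hbmul _ _ (hD2 i)
  have hAD : ∀ i : Fin d, Integrable (fun ω => ω (0, i) * Dgrad φμ i ω) P :=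
    fun i => hbmul _ _ ((hD i).integrable one_le_two)
  have hT1 : ∀ i : Fin d,
      Integrable (fun ω => ω (0,i) * (φμ ω * (φμ ω - φμ (shift (unit i) ω)))) P :=
    fun i => hbmul _ _ (memLp_mul_integrable hφ (hφ.sub (hps i)))
  have hT2 : ∀ i : Fin d,
      Integrable (fun ω => ω (-unit i, i) * (φμ ω * (φμ ω - φμ (shift (-unit i) ω)))) P :=
    fun i => hbmul _ _ (memLp_mul_integrable hφ (hφ.sub (hms i)))
  have hT3 : ∀ i : Fin d,
      Integrable (fun ω => ω (0,i) * (φμ (shift (unit i) ω) * (φμ (shift (unit i) ω) - φμ ω))) P :=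
    fun i => hbmul _ _ (memLp_mul_integrable (hps i) ((hps i).sub hφ))
  have hAφ : ∀ e : Edge d, Integrable (fun ω => ω e * φμ ω) P :=
    fun e => hbmul _ _ (hφ.integrable one_le_two)
  have hAψ : ∀ i : Fin d, Integrable (fun ω => ω (0,i) * φμ (shift (unit i) ω)) P :=
    fun i => hbmul _ _ ((hps i).integrable one_le_two)
  have hcancel : ∀ (ω : Env d) (i : Fin d), shift (unit i) (shift (-unit i) ω) = ω := by
    intro ω i; rw [shift_shift]; simp [shift_zero]
  -- transfer lemma for the backward term of `genL`
  have htrans : ∀ i : Fin d,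
      ∫ ω, ω (-unit i, i) * (φμ ω * (φμ ω - φμ (shift (-unit i) ω))) ∂P
        = ∫ ω, ω (0,i) * (φμ (shift (unit i) ω) * (φμ (shift (unit i) ω) - φμ ω)) ∂P := by
    intro i
    rw [← integral_shift P hshift (-unit i)
        (fun ω => ω (0,i) * (φμ (shift (unit i) ω) * (φμ (shift (unit i) ω) - φμ ω)))]
    refine integral_congr_ae (Filter.Eventually.of_forall fun ω => ?_)
    show ω (-unit i, i) * (φμ ω * (φμ ω - φμ (shift (-unit i) ω)))
      = (shift (-unit i) ω) (0, i) * (φμ (shift (unit i) (shift (-unit i) ω)) *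
          (φμ (shift (unit i) (shift (-unit i) ω)) - φμ (shift (-unit i) ω)))
    rw [hcancel ω i]
    congr 1
    simp [shift]
  -- left-hand side of the weak formulation
  have hL : ∫ ω, φμ ω * (μ * φμ ω + genL φμ ω) ∂P
      = μ * (∫ ω, φμ ω ^ 2 ∂P)
        + ∑ i : Fin d, ∫ ω, ω (0,i) * (Dgrad φμ i ω) ^ 2 ∂P := by
    have expand : (fun ω => φμ ω * (μ * φμ ω + genL φμ ω))
        = fun ω => μ * φμ ω ^ 2
            + ∑ i : Fin d, (ω (0,i) * (φμ ω * (φμ ω - φμ (shift (unit i) ω)))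
              + ω (-unit i, i) * (φμ ω * (φμ ω - φμ (shift (-unit i) ω)))) := by
      funext ω
      rw [genL, mul_add, Finset.mul_sum]
      congr 1
      · ring
      · exact Finset.sum_congr rfl fun i _ => by ring
    have hsumInt : Integrable (fun ω => ∑ i : Fin d,
        (ω (0,i) * (φμ ω * (φμ ω - φμ (shift (unit i) ω)))
          + ω (-unit i, i) * (φμ ω * (φμ ω - φμ (shift (-unit i) ω))))) P := by
      apply integrable_finset_sum
      intro i _
      exact (hT1 i).add (hT2 i)
    have heach : ∀ i : Fin d, Integrable (fun ω =>
        ω (0,i) * (φμ ω * (φμ ω - φμ (shift (unit i) ω)))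
          + ω (-unit i, i) * (φμ ω * (φμ ω - φμ (shift (-unit i) ω)))) P := by
      intro i
      exact (hT1 i).add (hT2 i)
    rw [expand, integral_add (hφ2.const_mul μ) hsumInt, integral_const_mul,
      integral_finset_sum _ (fun i _ => heach i)]
    congr 1
    refine Finset.sum_congr rfl fun i _ => ?_
    rw [integral_add (hT1 i) (hT2 i), htrans i, ← integral_add (hT1 i) (hT3 i)]
    refine integral_congr_ae (Filter.Eventually.of_forall fun ω => ?_)
    simp only [Dgrad]
    ring
  -- right-hand side of the weak formulation
  have hR : ∫ ω, φμ ω * drift ξ ω ∂P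
      = ∑ i : Fin d, (- ξ i) * ∫ ω, ω (0,i) * Dgrad φμ i ω ∂P := by
    have expand : (fun ω => φμ ω * drift ξ ω)
        = fun ω => ∑ i : Fin d,
            (ξ i * (ω (0,i) * φμ ω) + (- ξ i) * (ω (-unit i, i) * φμ ω)) := by
      funext ω
      rw [drift, Finset.mul_sum]
      exact Finset.sum_congr rfl fun i _ => by ring
    have heach : ∀ i : Fin d, Integrable (fun ω =>
        ξ i * (ω (0,i) * φμ ω) + (- ξ i) * (ω (-unit i, i) * φμ ω)) P := by
      intro i
      exact ((hAφ (0,i)).const_mul _).add ((hAφ (-unit i, i)).const_mul _)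
    rw [expand, integral_finset_sum _ (fun i _ => heach i)]
    refine Finset.sum_congr rfl fun i _ => ?_
    rw [integral_add ((hAφ (0,i)).const_mul (ξ i)) ((hAφ (-unit i,i)).const_mul (- ξ i)),
        integral_const_mul, integral_const_mul]
    have hBφ : ∫ ω, ω (-unit i, i) * φμ ω ∂P
        = ∫ ω, ω (0,i) * φμ (shift (unit i) ω) ∂P := by
      rw [← integral_shift P hshift (-unit i) (fun ω => ω (0,i) * φμ (shift (unit i) ω))]
      refine integral_congr_ae (Filter.Eventually.of_forall fun ω => ?_)
      show ω (-unit i, i) * φμ ω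
        = (shift (-unit i) ω) (0, i) * φμ (shift (unit i) (shift (-unit i) ω))
      rw [hcancel ω i]
      congr 1
      simp [shift]
    rw [hBφ]
    have hsplit : ∫ ω, ω (0,i) * Dgrad φμ i ω ∂P
        = ∫ ω, ω (0,i) * φμ (shift (unit i) ω) ∂P - ∫ ω, ω (0,i) * φμ ω ∂P := by
      rw [← integral_sub (hAψ i) (hAφ (0,i))]
      refine integral_congr_ae (Filter.Eventually.of_forall fun ω => ?_)
      simp only [Dgrad]
      ring
    rw [hsplit]
    ring
  -- the weak formulation itself
  have h0 : ∫ ω, φμ ω * (μ * φμ ω + genL φμ ω) ∂P = ∫ ω, φμ ω * drift ξ ω ∂P :=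
    integral_congr_ae (heq.mono fun ω h => by dsimp only; rw [h])
  have hkey : μ * (∫ ω, φμ ω ^ 2 ∂P)
        + ∑ i : Fin d, ∫ ω, ω (0,i) * (Dgrad φμ i ω) ^ 2 ∂P
      = ∑ i : Fin d, (- ξ i) * ∫ ω, ω (0,i) * Dgrad φμ i ω ∂P := by
    rw [← hL, h0, hR]
  -- bound each term of the right-hand side by Young's inequality
  have hAle : ∀ i : Fin d, ∫ ω, ω (0,i) ∂P ≤ β := by
    intro i
    have := integral_mono_ae (hAconst (0,i)) (integrable_const β)
      ((hbdd (0,i)).mono fun ω h => le_trans (le_abs_self _) h)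
    simpa using this
  have hYoung : ∀ i : Fin d, (- ξ i) * ∫ ω, ω (0,i) * Dgrad φμ i ω ∂P
      ≤ (1/2) * ∫ ω, ω (0,i) * (Dgrad φμ i ω) ^ 2 ∂P + (ξ i ^ 2 / 2) * β := by
    intro i
    have step1 : (- ξ i) * ∫ ω, ω (0,i) * Dgrad φμ i ω ∂P
        ≤ ∫ ω, ((1/2) * (ω (0,i) * (Dgrad φμ i ω) ^ 2) + (ξ i ^ 2 / 2) * ω (0,i)) ∂P := by
      rw [← integral_const_mul]
      refine integral_mono_ae ((hAD i).const_mul _)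
        (((hAD2 i).const_mul _).add ((hAconst (0,i)).const_mul _)) ?_
      filter_upwards [hsupp] with ω hω
      have ha : 0 ≤ ω (0,i) := le_trans hα.le (hω (0,i)).1
      nlinarith [mul_nonneg ha (sq_nonneg (Dgrad φμ i ω + ξ i))]
    have step2 : ∫ ω, ((1/2) * (ω (0,i) * (Dgrad φμ i ω) ^ 2) + (ξ i ^ 2 / 2) * ω (0,i)) ∂P
        = (1/2) * ∫ ω, ω (0,i) * (Dgrad φμ i ω) ^ 2 ∂P + (ξ i ^ 2 / 2) * ∫ ω, ω (0,i) ∂P := by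
      rw [integral_add ((hAD2 i).const_mul _) ((hAconst (0,i)).const_mul _),
        integral_const_mul, integral_const_mul]
    have step3 : (ξ i ^ 2 / 2) * ∫ ω, ω (0,i) ∂P ≤ (ξ i ^ 2 / 2) * β :=
      mul_le_mul_of_nonneg_left (hAle i) (by positivity)
    calc (- ξ i) * ∫ ω, ω (0,i) * Dgrad φμ i ω ∂P
        ≤ _ := step1
      _ = _ := step2
      _ ≤ _ := by linarith
  -- sum up
  set S := ∑ i : Fin d, ∫ ω, ω (0,i) * (Dgrad φμ i ω) ^ 2 ∂P with hSdef
  set T := ∫ ω, φμ ω ^ 2 ∂P with hTdef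
  have hsumY : ∑ i : Fin d, (- ξ i) * ∫ ω, ω (0,i) * Dgrad φμ i ω ∂P
      ≤ (1/2) * S + (β/2) * ∑ i, ξ i ^ 2 := by
    calc ∑ i : Fin d, (- ξ i) * ∫ ω, ω (0,i) * Dgrad φμ i ω ∂P
        ≤ ∑ i : Fin d, ((1/2) * ∫ ω, ω (0,i) * (Dgrad φμ i ω) ^ 2 ∂P + (ξ i ^ 2 / 2) * β) :=
          Finset.sum_le_sum fun i _ => hYoung i
      _ = (1/2) * S + (β/2) * ∑ i, ξ i ^ 2 := by
          rw [Finset.sum_add_distrib, ← Finset.mul_sum]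
          congr 1
          rw [Finset.mul_sum]
          exact Finset.sum_congr rfl fun i _ => by ring
  have hmain : μ * T + S ≤ (1/2) * S + (β/2) * ∑ i, ξ i ^ 2 := by
    rw [hkey]; exact hsumY
  have hS0 : 0 ≤ S := by
    refine Finset.sum_nonneg fun i _ => integral_nonneg_of_ae ?_
    filter_upwards [hsupp] with ω hω
    exact mul_nonneg (le_trans hα.le (hω (0,i)).1) (sq_nonneg _)
  have hT0 : 0 ≤ T := integral_nonneg fun ω => sq_nonneg _
  have hμT0 : 0 ≤ μ * T := mul_nonneg hμ.le hT0
  have hSb : S ≤ β * ∑ i, ξ i ^ 2 := by linarith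
  have hTb : μ * T ≤ (β/2) * ∑ i, ξ i ^ 2 := by linarith
  constructor
  · -- first estimate
    have hint : ∫ ω, ∑ i : Fin d, (Dgrad φμ i ω) ^ 2 ∂P
        = ∑ i : Fin d, ∫ ω, (Dgrad φμ i ω) ^ 2 ∂P :=
      integral_finset_sum _ fun i _ => hD2 i
    have hlow : ∀ i : Fin d, α * ∫ ω, (Dgrad φμ i ω) ^ 2 ∂P
        ≤ ∫ ω, ω (0,i) * (Dgrad φμ i ω) ^ 2 ∂P := by
      intro i
      rw [← integral_const_mul]
      refine integral_mono_ae ((hD2 i).const_mul _) (hAD2 i) ?_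
      filter_upwards [hsupp] with ω hω
      exact mul_le_mul_of_nonneg_right (hω (0,i)).1 (sq_nonneg _)
    have hX : α * ∫ ω, ∑ i : Fin d, (Dgrad φμ i ω) ^ 2 ∂P ≤ S := by
      rw [hint, Finset.mul_sum]
      exact Finset.sum_le_sum fun i _ => hlow i
    rw [le_div_iff₀ (by positivity : (0:ℝ) < α ^ 2)]
    have hprod : 0 ≤ β * (∑ i, ξ i ^ 2) * (β - α) :=
      mul_nonneg (mul_nonneg hβ0 hE0) (sub_nonneg.mpr hαβ)
    nlinarith [mul_le_mul_of_nonneg_right (hX.trans hSb) hα.le]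
  · -- second estimate
    rw [le_div_iff₀ hα]
    have hprod : 0 ≤ β * (∑ i, ξ i ^ 2) * (2 * β - α) :=
      mul_nonneg (mul_nonneg hβ0 hE0) (by linarith)
    nlinarith [mul_le_mul_of_nonneg_right hTb hα.le]

end StochHom
end

section
/- (Abstract spectral Cauchy criterion underlying the Kipnis–Varadhan argument.) For every μ > 0 the operator μ·Id + T is invertible, so that φ_μ := (μ·Id + T)^{−1} 𝔡 is well defined. If moreover sup_{0<μ≤1} ⟨φ_μ, T φ_μ⟩ < ∞, then ⟨φ_μ − φ_ν, T(φ_μ − φ_ν)⟩ → 0 as μ, ν → 0: for every ε > 0 there exists δ > 0 such that ⟨φ_μ − φ_ν, T(φ_μ − φ_ν)⟩ ≤ ε whenever 0 < μ ≤ δ and 0 < ν ≤ δ. -/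
open MeasureTheory

/-- abstract spectral Cauchy criterion underlying the Kipnis–Varadhan
argument: for a bounded self-adjoint non-negative operator `T` on a real Hilbert space
and `𝔡 ∈ H`, for every `μ > 0` the operator `μ·Id + T` is invertible (so that
`φ_μ := (μ·Id + T)⁻¹ 𝔡` is well defined), and if `sup_{0<μ≤1} ⟨φ_μ, T φ_μ⟩ < ∞` then
`⟨φ_μ − φ_ν, T(φ_μ − φ_ν)⟩ → 0` as `μ, ν → 0`. -/
theorem statement6 {H : Type*} [NormedAddCommGroup H] [InnerProductSpace ℝ H]
    [CompleteSpace H] (T : H →L[ℝ] H)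
    (hsa : ∀ x y : H, (inner ℝ (T x) y : ℝ) = inner ℝ x (T y))
    (hnn : ∀ x : H, (0 : ℝ) ≤ inner ℝ x (T x)) (𝔡 : H) :
    (∀ μ : ℝ, 0 < μ → Function.Bijective (fun x : H => μ • x + T x)) ∧
    ∀ φ : ℝ → H, (∀ μ : ℝ, 0 < μ → μ • φ μ + T (φ μ) = 𝔡) →
      (∃ M : ℝ, ∀ μ : ℝ, 0 < μ → μ ≤ 1 → (inner ℝ (φ μ) (T (φ μ)) : ℝ) ≤ M) →
      ∀ ε : ℝ, 0 < ε → ∃ δ : ℝ, 0 < δ ∧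
        ∀ μ ν : ℝ, 0 < μ → μ ≤ δ → 0 < ν → ν ≤ δ →
          (inner ℝ (φ μ - φ ν) (T (φ μ - φ ν)) : ℝ) ≤ ε := by
  constructor
  · -- Bijectivity of `x ↦ μ x + T x`.
    intro μ hμ
    set S : H →L[ℝ] H := μ • ContinuousLinearMap.id ℝ H + T with hSdef
    have hSx : ∀ x : H, S x = μ • x + T x := fun x => rfl
    have hcoer : ∀ x : H, μ * ‖x‖ ^ 2 ≤ inner ℝ x (S x) := by
      intro x
      rw [hSx, inner_add_right, real_inner_smul_right, real_inner_self_eq_norm_sq]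
      nlinarith [hnn x]
    have hlow : ∀ x : H, μ * ‖x‖ ≤ ‖S x‖ := by
      intro x
      rcases eq_or_ne x 0 with rfl | hx
      · simp
      · have h1 : μ * ‖x‖ ^ 2 ≤ ‖x‖ * ‖S x‖ :=
          (hcoer x).trans (real_inner_le_norm x (S x))
        have hxpos : 0 < ‖x‖ := norm_pos_iff.mpr hx
        nlinarith
    have hinj : Function.Injective S := by
      intro x y hxy
      have h0 : S (x - y) = 0 := by rw [map_sub, hxy, sub_self]
      have := hlow (x - y)
      rw [h0, norm_zero] at this
      have : ‖x - y‖ ≤ 0 := by nlinarith [norm_nonneg (x - y)]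
      have : x - y = 0 := by
        rw [← norm_le_zero_iff]; exact this
      exact sub_eq_zero.mp this
    have hsurj : Function.Surjective S := by
      have hanti : AntilipschitzWith (⟨μ, hμ.le⟩ : NNReal)⁻¹ S := by
        apply ContinuousLinearMap.antilipschitz_of_bound
        intro x
        have h := hlow x
        change ‖x‖ ≤ μ⁻¹ * ‖S x‖
        rw [le_inv_mul_iff₀ (by exact_mod_cast hμ)]
        simpa [mul_comm] using h
      have hclosed : IsClosed (Set.range S) :=
        hanti.isClosed_range S.uniformContinuous
      set K : Submodule ℝ H := LinearMap.range (S : H →ₗ[ℝ] H) with hK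
      have hKrange : (K : Set H) = Set.range S := by
        ext x; simp [hK, LinearMap.mem_range]
      have hKclosed : IsClosed (K : Set H) := by rw [hKrange]; exact hclosed
      haveI : CompleteSpace K := hKclosed.completeSpace_coe
      have horth : Kᗮ = ⊥ := by
        rw [Submodule.eq_bot_iff]
        intro y hy
        have hySy : (inner ℝ (S y) y : ℝ) = 0 := by
          exact hy (S y) (LinearMap.mem_range.mpr ⟨y, rfl⟩)
        have h1 : μ * ‖y‖ ^ 2 ≤ 0 := by
          have := hcoer y
          rw [real_inner_comm] at hySy
          linarith [hySy ▸ this]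
        have h2 : ‖y‖ ^ 2 ≤ 0 := by nlinarith
        have h3 : ‖y‖ ^ 2 = 0 := le_antisymm h2 (sq_nonneg _)
        have h4 : ‖y‖ = 0 := by
          have := sq_eq_zero_iff.mp h3
          exact this
        simpa using norm_eq_zero.mp h4
      have hKtop : K = ⊤ := Submodule.orthogonal_eq_bot_iff.mp horth
      intro y
      have : y ∈ K := hKtop ▸ Submodule.mem_top
      obtain ⟨x, hx⟩ := LinearMap.mem_range.mp this
      exact ⟨x, hx⟩
    exact ⟨hinj, hsurj⟩
  · -- Cauchy criterion.
    rintro φ hφ ⟨M, hM⟩ ε hε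
    set a : ℝ → ℝ := fun t => (inner ℝ (φ t) (T (φ t)) : ℝ) with ha
    -- Key lemma: for `0 < μ < ν`, with `d = φ μ - φ ν`,
    -- `⟨d, T d⟩ ≤ a μ - a ν` and `a ν ≤ a μ`.
    have key : ∀ μ ν : ℝ, 0 < μ → μ < ν →
        (inner ℝ (φ μ - φ ν) (T (φ μ - φ ν)) : ℝ) ≤ a μ - a ν ∧ a ν ≤ a μ := by
      intro μ ν hμ hμν
      have hν : 0 < ν := hμ.trans hμν
      set d : H := φ μ - φ ν with hd
      have hres : μ • d + T d = (ν - μ) • φ ν := by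
        have h3 : μ • φ μ + T (φ μ) = ν • φ ν + T (φ ν) := by
          rw [hφ μ hμ, hφ ν hν]
        rw [hd, smul_sub, map_sub, sub_smul]
        have h4 : μ • φ μ - μ • φ ν + (T (φ μ) - T (φ ν))
            = (μ • φ μ + T (φ μ)) - (μ • φ ν + T (φ ν)) := by abel
        rw [h4, h3]; abel
      have hTres : (ν - μ) • T (φ ν) = μ • T d + T (T d) := by
        rw [← _root_.map_smul, ← hres, map_add, _root_.map_smul]
      have hkey1 : (ν - μ) * (inner ℝ d (T (φ ν)) : ℝ)
          = μ * (inner ℝ d (T d) : ℝ) + (inner ℝ (T d) (T d) : ℝ) := by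
        have h5 := congrArg (fun z : H => (inner ℝ d z : ℝ)) hTres
        simp only [inner_add_right, real_inner_smul_right] at h5
        have h6 : (inner ℝ d (T (T d)) : ℝ) = inner ℝ (T d) (T d) := by
          rw [← hsa (T d) d, real_inner_comm]
        rw [h6] at h5
        exact h5
      have hdTφν : (0 : ℝ) ≤ inner ℝ d (T (φ ν)) := by
        have h7 : (0 : ℝ) ≤ μ * (inner ℝ d (T d) : ℝ) + (inner ℝ (T d) (T d) : ℝ) := by
          have := hnn d
          have := real_inner_self_nonneg (x := T d)
          nlinarith
        nlinarith [hkey1]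
      have hφμ : φ μ = d + φ ν := by rw [hd]; abel
      have hexp : a μ = (inner ℝ d (T d) : ℝ) + 2 * (inner ℝ d (T (φ ν)) : ℝ) + a ν := by
        have h8 : a μ = (inner ℝ (d + φ ν) (T (d + φ ν)) : ℝ) := by
          rw [ha]; simp only [← hφμ]
        rw [h8, map_add, inner_add_left, inner_add_right, inner_add_right]
        have h9 : (inner ℝ (φ ν) (T d) : ℝ) = inner ℝ d (T (φ ν)) := by
          rw [← hsa (φ ν) d, real_inner_comm]
        rw [h9, ha]
        ring
      constructor
      · rw [hexp]; linarith
      · rw [hexp]; have := hnn d; linarith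
    -- Supremum argument.
    have hne : (a '' Set.Ioc (0:ℝ) 1).Nonempty :=
      ⟨a 1, ⟨1, ⟨one_pos, le_refl 1⟩, rfl⟩⟩
    have hbdd : BddAbove (a '' Set.Ioc (0:ℝ) 1) := by
      refine ⟨M, ?_⟩
      rintro x ⟨t, ht, rfl⟩
      exact hM t ht.1 ht.2
    set Ssup : ℝ := sSup (a '' Set.Ioc (0:ℝ) 1) with hSsup
    obtain ⟨x, hxA, hx⟩ := exists_lt_of_lt_csSup hne (show Ssup - ε < Ssup by linarith)
    obtain ⟨δ, hδmem, rfl⟩ := hxA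
    refine ⟨δ, hδmem.1, ?_⟩
    have main : ∀ μ ν : ℝ, 0 < μ → μ ≤ δ → 0 < ν → ν ≤ δ → μ < ν →
        (inner ℝ (φ μ - φ ν) (T (φ μ - φ ν)) : ℝ) ≤ ε := by
      intro μ ν hμ hμδ hν hνδ hlt
      obtain ⟨h1, h2⟩ := key μ ν hμ hlt
      have haμ : a μ ≤ Ssup :=
        le_csSup hbdd ⟨μ, ⟨hμ, hμδ.trans hδmem.2⟩, rfl⟩
      have haν : a δ ≤ a ν := by
        rcases eq_or_lt_of_le hνδ with h | h
        · rw [h]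
        · exact (key ν δ hν h).2
      linarith
    intro μ ν hμ hμδ hν hνδ
    rcases lt_trichotomy μ ν with h | h | h
    · exact main μ ν hμ hμδ hν hνδ h
    · subst h
      simp only [sub_self, map_zero, inner_zero_right]
      linarith
    · have hsym : (inner ℝ (φ μ - φ ν) (T (φ μ - φ ν)) : ℝ)
          = inner ℝ (φ ν - φ μ) (T (φ ν - φ μ)) := by
        have h10 : φ μ - φ ν = -(φ ν - φ μ) := by abel
        rw [h10, map_neg, inner_neg_neg]
      rw [hsym]
      exact main ν μ hν hνδ hμ hμδ h
end

section
/- (From spectral-exponent bounds to systematic-error rates.) There exists a constant C, depending only on K, q and the total mass e((0,∞)), such that for all 0 < μ ≤ 1/2: if 2 ≤ q < 3 then μ² ∫_{(0,∞)} (μ+λ)^{−2} λ^{−1} de(λ) ≤ C μ^{q−1}; if q = 3 then μ² ∫_{(0,∞)} (μ+λ)^{−2} λ^{−1} de(λ) ≤ C μ² log(1/μ); and if q > 3 then μ² ∫_{(0,∞)} (μ+λ)^{−2} λ^{−1} de(λ) ≤ C μ². (Taking q = d/2 + 1 this converts the optimal bound on the spectral exponents of the local drift into the systematic-error rates μ for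 d = 2, μ^{3/2} for d = 3, μ² |log μ| for d = 4, and μ² for d > 4.) -/
open MeasureTheory Set
open scoped ENNReal

lemma piece_bound (e : Measure ℝ) {s : Set ℝ} (hs : MeasurableSet s) {f : ℝ → ℝ} {c : ℝ}
    (hf : ∀ x ∈ s, f x ≤ c) {B : ℝ≥0∞} (hB : e s ≤ B) :
    ∫⁻ x in s, ENNReal.ofReal (f x) ∂e ≤ ENNReal.ofReal c * B :=
  calc ∫⁻ x in s, ENNReal.ofReal (f x) ∂e
      ≤ ∫⁻ _ in s, ENNReal.ofReal c ∂e :=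
        setLIntegral_mono' hs fun x hx => ENNReal.ofReal_le_ofReal (hf x hx)
    _ = ENNReal.ofReal c * e s := setLIntegral_const s _
    _ ≤ ENNReal.ofReal c * B := mul_le_mul_right hB _

lemma tsum_geom (D θ : ℝ) (hD : 0 ≤ D) (hθ0 : 0 ≤ θ) (hθ1 : θ < 1) :
    ∑' n : ℕ, ENNReal.ofReal (D * θ ^ n) = ENNReal.ofReal (D * (1 - θ)⁻¹) := by
  have h1 : ∀ n : ℕ, ENNReal.ofReal (D * θ ^ n) = ENNReal.ofReal D * (ENNReal.ofReal θ) ^ n := by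
    intro n; rw [ENNReal.ofReal_mul hD, ENNReal.ofReal_pow hθ0]
  simp_rw [h1]
  rw [ENNReal.tsum_mul_left, ENNReal.tsum_geometric, ENNReal.ofReal_mul hD]
  congr 1
  rw [← ENNReal.ofReal_one, ← ENNReal.ofReal_sub _ hθ0, ENNReal.ofReal_inv_of_pos (by linarith)]

lemma split_rpow {b x : ℝ} (hb : 0 < b) (hx : 0 < x) (m : ℕ) (z : ℝ) :
    (x * b ^ m) ^ z = x ^ z * b ^ ((m : ℝ) * z) := by
  rw [Real.mul_rpow hx.le (by positivity), ← Real.rpow_natCast b m, ← Real.rpow_mul hb.le]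

lemma keycalc_down (K r a q : ℝ) (hr : 0 < r) (n : ℕ) :
    (r * (1/2 : ℝ) ^ (n+1)) ^ (-a) * (K * (r * (1/2 : ℝ) ^ n) ^ q)
      = (K * r ^ (q-a) * (2:ℝ) ^ a) * ((1/2 : ℝ) ^ (q-a)) ^ n := by
  have hh : (0:ℝ) < 1/2 := by norm_num
  rw [split_rpow hh hr (n+1) (-a), split_rpow hh hr n q]
  have e2 : ((1/2:ℝ) ^ (q-a)) ^ n = (1/2:ℝ) ^ ((q-a) * (n:ℝ)) := by
    rw [← Real.rpow_natCast ((1/2:ℝ) ^ (q-a)) n, ← Real.rpow_mul hh.le]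
  have e3 : (2:ℝ) ^ a = (1/2:ℝ) ^ (-a) := by
    rw [Real.rpow_neg hh.le, one_div, Real.inv_rpow (by norm_num : (0:ℝ) ≤ 2), inv_inv]
  have e4 : r ^ (q-a) = r ^ q * r ^ (-a) := by
    rw [← Real.rpow_add hr]; ring_nf
  rw [e2, e3, e4]
  have e5 : (1/2:ℝ) ^ (((n+1 : ℕ) : ℝ) * (-a)) * (1/2:ℝ) ^ ((n:ℝ) * q)
      = (1/2:ℝ) ^ (-a) * (1/2:ℝ) ^ ((q-a) * (n:ℝ)) := by
    rw [← Real.rpow_add hh, ← Real.rpow_add hh]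
    congr 1
    push_cast; ring
  linear_combination (K * (r ^ q * r ^ (-a))) * e5

lemma keycalc_up (K μ q : ℝ) (hμ : 0 < μ) (n : ℕ) :
    (μ * (2:ℝ) ^ n) ^ (-3 : ℝ) * (K * (μ * (2:ℝ) ^ (n+1)) ^ q)
      = (K * (2:ℝ) ^ q * μ ^ (q-3)) * ((1/2 : ℝ) ^ (3-q)) ^ n := by
  have h2 : (0:ℝ) < 2 := two_pos
  have hh : (0:ℝ) < 1/2 := by norm_num
  rw [split_rpow h2 hμ n (-3 : ℝ), split_rpow h2 hμ (n+1) q]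
  have e2 : ((1/2:ℝ) ^ (3-q)) ^ n = (2:ℝ) ^ ((q-3) * (n:ℝ)) := by
    rw [← Real.rpow_natCast ((1/2:ℝ) ^ (3-q)) n, ← Real.rpow_mul hh.le, one_div,
      Real.inv_rpow h2.le, ← Real.rpow_neg h2.le]
    congr 1; ring
  have e4 : μ ^ (q-3) = μ ^ q * μ ^ (-3:ℝ) := by
    rw [← Real.rpow_add hμ]; ring_nf
  rw [e2, e4]
  have e5 : (2:ℝ) ^ ((n:ℝ) * (-3:ℝ)) * (2:ℝ) ^ (((n+1 : ℕ):ℝ) * q)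
      = (2:ℝ) ^ q * (2:ℝ) ^ ((q-3) * (n:ℝ)) := by
    rw [← Real.rpow_add h2, ← Real.rpow_add h2]
    congr 1
    push_cast; ring
  linear_combination (K * (μ ^ q * μ ^ (-3:ℝ))) * e5

lemma keycalc_up3 (K μ : ℝ) (hμ : 0 < μ) (n : ℕ) :
    (μ * (2:ℝ) ^ n) ^ (-3 : ℝ) * (K * (μ * (2:ℝ) ^ (n+1)) ^ (3:ℝ)) = 8 * K := by
  have h2 : (0:ℝ) < 2 := two_pos
  rw [split_rpow h2 hμ n (-3 : ℝ), split_rpow h2 hμ (n+1) (3:ℝ)]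
  have e6 : μ ^ (-3:ℝ) * μ ^ (3:ℝ) = 1 := by
    rw [← Real.rpow_add hμ]; norm_num
  have e7 : (2:ℝ) ^ ((n:ℝ) * (-3:ℝ)) * (2:ℝ) ^ (((n+1 : ℕ):ℝ) * (3:ℝ)) = 8 := by
    rw [← Real.rpow_add h2, show ((n:ℝ) * (-3:ℝ) + ((n+1 : ℕ):ℝ) * (3:ℝ)) = ((3:ℕ):ℝ) by
      push_cast; ring, Real.rpow_natCast]
    norm_num
  linear_combination K * (μ ^ (-3:ℝ) * μ ^ (3:ℝ)) * e7 + 8 * K * e6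

lemma down_lemma (e : Measure ℝ) (K q a : ℝ) (hK : 0 ≤ K) (ha : 0 ≤ a) (haq : a < q)
    (hbound : ∀ ν : ℝ, 0 < ν → ν ≤ 1 → e (Set.Ioc 0 ν) ≤ ENNReal.ofReal (K * ν ^ q))
    (r : ℝ) (hr : 0 < r) (hr1 : r ≤ 1) :
    ∫⁻ x in Set.Ioc 0 r, ENNReal.ofReal (x ^ (-a)) ∂e
      ≤ ENNReal.ofReal ((K * r ^ (q - a) * (2:ℝ) ^ a) * (1 - (1/2 : ℝ) ^ (q - a))⁻¹) := by
  have hh : (0:ℝ) < 1/2 := by norm_num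
  set s : ℕ → Set ℝ := fun n => Set.Ioc (r * (1/2 : ℝ) ^ (n+1)) (r * (1/2 : ℝ) ^ n) with hs
  have hsub : Set.Ioc 0 r ⊆ ⋃ n, s n := by
    rintro x ⟨hx0, hxr⟩
    have h1 : 1 ≤ r / x := (one_le_div hx0).2 hxr
    obtain ⟨n, h2n, h2n'⟩ := exists_nat_pow_near h1 (one_lt_two (α := ℝ))
    have h2 : (0:ℝ) < 2 ^ (n+1) := by positivity
    refine Set.mem_iUnion.2 ⟨n, ?_, ?_⟩
    · have hr2 : r < 2 ^ (n+1) * x := (div_lt_iff₀ hx0).1 h2n'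
      have : r * (1/2 : ℝ) ^ (n+1) = r / 2 ^ (n+1) := by
        rw [one_div, inv_pow, div_eq_mul_inv]
      rw [this, div_lt_iff₀ h2]
      linarith [hr2]
    · have hr2 : 2 ^ n * x ≤ r := (le_div_iff₀ hx0).1 h2n
      have h3 : (0:ℝ) < 2 ^ n := by positivity
      calc x = (2 ^ n * x) * (1/2 : ℝ) ^ n := by
              rw [one_div, inv_pow]; field_simp
        _ ≤ r * (1/2 : ℝ) ^ n := mul_le_mul_of_nonneg_right hr2 (by positivity)
  have term_bd : ∀ n : ℕ, ∫⁻ x in s n, ENNReal.ofReal (x ^ (-a)) ∂e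
      ≤ ENNReal.ofReal ((K * r ^ (q-a) * (2:ℝ) ^ a) * ((1/2 : ℝ) ^ (q-a)) ^ n) := by
    intro n
    have hlow : (0:ℝ) < r * (1/2 : ℝ) ^ (n+1) := by positivity
    have hup0 : (0:ℝ) < r * (1/2 : ℝ) ^ n := by positivity
    have hup1 : r * (1/2 : ℝ) ^ n ≤ 1 := by
      have h4 : (1/2 : ℝ) ^ n ≤ 1 := pow_le_one₀ (by norm_num) (by norm_num)
      nlinarith
    have h1 : ∀ x ∈ s n, x ^ (-a) ≤ (r * (1/2 : ℝ) ^ (n+1)) ^ (-a) := by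
      intro x hx
      have hx0 : 0 < x := hlow.trans hx.1
      rw [Real.rpow_neg hx0.le, Real.rpow_neg hlow.le]
      exact inv_anti₀ (Real.rpow_pos_of_pos hlow a)
        (Real.rpow_le_rpow hlow.le hx.1.le ha)
    have h2 : e (s n) ≤ ENNReal.ofReal (K * (r * (1/2 : ℝ) ^ n) ^ q) := by
      have hmono : s n ⊆ Set.Ioc 0 (r * (1/2 : ℝ) ^ n) := fun x hx => ⟨hlow.trans hx.1, hx.2⟩
      exact le_trans (measure_mono hmono) (hbound _ hup0 hup1)
    calc ∫⁻ x in s n, ENNReal.ofReal (x ^ (-a)) ∂e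
        ≤ ENNReal.ofReal ((r * (1/2 : ℝ) ^ (n+1)) ^ (-a))
            * ENNReal.ofReal (K * (r * (1/2 : ℝ) ^ n) ^ q) :=
          piece_bound e measurableSet_Ioc h1 h2
      _ = ENNReal.ofReal ((r * (1/2 : ℝ) ^ (n+1)) ^ (-a) * (K * (r * (1/2 : ℝ) ^ n) ^ q)) :=
          (ENNReal.ofReal_mul (by positivity)).symm
      _ = ENNReal.ofReal ((K * r ^ (q-a) * (2:ℝ) ^ a) * ((1/2 : ℝ) ^ (q-a)) ^ n) := by
          rw [keycalc_down K r a q hr n]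
  have hθ : (1/2 : ℝ) ^ (q-a) < 1 :=
    Real.rpow_lt_one (by norm_num) (by norm_num) (by linarith)
  calc ∫⁻ x in Set.Ioc 0 r, ENNReal.ofReal (x ^ (-a)) ∂e
      ≤ ∫⁻ x in ⋃ n, s n, ENNReal.ofReal (x ^ (-a)) ∂e := lintegral_mono_set hsub
    _ ≤ ∑' n, ∫⁻ x in s n, ENNReal.ofReal (x ^ (-a)) ∂e := lintegral_iUnion_le _ _
    _ ≤ ∑' n : ℕ, ENNReal.ofReal ((K * r ^ (q-a) * (2:ℝ) ^ a) * ((1/2 : ℝ) ^ (q-a)) ^ n) :=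
        ENNReal.tsum_le_tsum term_bd
    _ = ENNReal.ofReal ((K * r ^ (q-a) * (2:ℝ) ^ a) * (1 - (1/2 : ℝ) ^ (q-a))⁻¹) :=
        tsum_geom _ _ (by positivity) (by positivity) hθ

lemma up_lemma (e : Measure ℝ) (K q : ℝ) (hK : 0 ≤ K) (hq0 : 0 < q) (hq3 : q < 3)
    (hbound : ∀ ν : ℝ, 0 < ν → ν ≤ 1 → e (Set.Ioc 0 ν) ≤ ENNReal.ofReal (K * ν ^ q))
    (μ : ℝ) (hμ : 0 < μ) :
    ∫⁻ x in Set.Ioc μ 1, ENNReal.ofReal (x ^ (-3 : ℝ)) ∂e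
      ≤ ENNReal.ofReal ((K * (2:ℝ) ^ q * μ ^ (q - 3)) * (1 - (1/2 : ℝ) ^ (3 - q))⁻¹) := by
  set s : ℕ → Set ℝ := fun n => Set.Ico (μ * 2 ^ n) (μ * 2 ^ (n+1)) ∩ Set.Ioc 0 1 with hs
  have hsub : Set.Ioc μ 1 ⊆ ⋃ n, s n := by
    rintro x ⟨hx1, hx2⟩
    have h1 : 1 ≤ x / μ := le_of_lt ((one_lt_div hμ).2 hx1)
    obtain ⟨n, ha, hb⟩ := exists_nat_pow_near h1 (one_lt_two (α := ℝ))
    refine Set.mem_iUnion.2 ⟨n, ⟨⟨?_, ?_⟩, hμ.trans hx1, hx2⟩⟩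
    · rw [mul_comm]; exact (le_div_iff₀ hμ).1 ha
    · rw [mul_comm]; exact (div_lt_iff₀ hμ).1 hb
  have term_bd : ∀ n : ℕ, ∫⁻ x in s n, ENNReal.ofReal (x ^ (-3:ℝ)) ∂e
      ≤ ENNReal.ofReal ((K * (2:ℝ) ^ q * μ ^ (q-3)) * ((1/2 : ℝ) ^ (3-q)) ^ n) := by
    intro n
    have hlow : (0:ℝ) < μ * 2 ^ n := by positivity
    have hmin0 : (0:ℝ) < min (μ * 2 ^ (n+1)) 1 := lt_min (by positivity) one_pos
    have h1 : ∀ x ∈ s n, x ^ (-3:ℝ) ≤ (μ * 2 ^ n) ^ (-3:ℝ) := by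
      intro x hx
      have hx0 : 0 < x := hx.2.1
      rw [Real.rpow_neg hx0.le, Real.rpow_neg hlow.le]
      exact inv_anti₀ (Real.rpow_pos_of_pos hlow 3)
        (Real.rpow_le_rpow hlow.le hx.1.1 (by norm_num))
    have h2 : e (s n) ≤ ENNReal.ofReal (K * (μ * 2 ^ (n+1)) ^ q) := by
      have hmono : s n ⊆ Set.Ioc 0 (min (μ * 2 ^ (n+1)) 1) :=
        fun x hx => ⟨hx.2.1, le_min hx.1.2.le hx.2.2⟩
      refine le_trans (measure_mono hmono) ?_
      refine le_trans (hbound _ hmin0 (min_le_right _ _)) ?_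
      exact ENNReal.ofReal_le_ofReal (mul_le_mul_of_nonneg_left
        (Real.rpow_le_rpow hmin0.le (min_le_left _ _) hq0.le) hK)
    calc ∫⁻ x in s n, ENNReal.ofReal (x ^ (-3:ℝ)) ∂e
        ≤ ENNReal.ofReal ((μ * 2 ^ n) ^ (-3:ℝ)) * ENNReal.ofReal (K * (μ * 2 ^ (n+1)) ^ q) :=
          piece_bound e (measurableSet_Ico.inter measurableSet_Ioc) h1 h2
      _ = ENNReal.ofReal ((μ * 2 ^ n) ^ (-3:ℝ) * (K * (μ * 2 ^ (n+1)) ^ q)) :=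
          (ENNReal.ofReal_mul (by positivity)).symm
      _ = ENNReal.ofReal ((K * (2:ℝ) ^ q * μ ^ (q-3)) * ((1/2 : ℝ) ^ (3-q)) ^ n) := by
          rw [keycalc_up K μ q hμ n]
  have hθ : (1/2 : ℝ) ^ (3-q) < 1 :=
    Real.rpow_lt_one (by norm_num) (by norm_num) (by linarith)
  calc ∫⁻ x in Set.Ioc μ 1, ENNReal.ofReal (x ^ (-3:ℝ)) ∂e
      ≤ ∫⁻ x in ⋃ n, s n, ENNReal.ofReal (x ^ (-3:ℝ)) ∂e := lintegral_mono_set hsub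
    _ ≤ ∑' n, ∫⁻ x in s n, ENNReal.ofReal (x ^ (-3:ℝ)) ∂e := lintegral_iUnion_le _ _
    _ ≤ ∑' n : ℕ, ENNReal.ofReal ((K * (2:ℝ) ^ q * μ ^ (q-3)) * ((1/2 : ℝ) ^ (3-q)) ^ n) :=
        ENNReal.tsum_le_tsum term_bd
    _ = ENNReal.ofReal ((K * (2:ℝ) ^ q * μ ^ (q-3)) * (1 - (1/2 : ℝ) ^ (3-q))⁻¹) :=
        tsum_geom _ _ (by positivity) (by positivity) hθ

lemma up3_lemma (e : Measure ℝ) (K : ℝ) (hK : 0 ≤ K)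
    (hbound : ∀ ν : ℝ, 0 < ν → ν ≤ 1 → e (Set.Ioc 0 ν) ≤ ENNReal.ofReal (K * ν ^ (3:ℝ)))
    (μ : ℝ) (hμ : 0 < μ) (N : ℕ) (hN : ∀ n, N ≤ n → 1 < μ * 2 ^ n) :
    ∫⁻ x in Set.Ioc μ 1, ENNReal.ofReal (x ^ (-3 : ℝ)) ∂e
      ≤ ENNReal.ofReal ((N : ℝ) * (8 * K)) := by
  set s : ℕ → Set ℝ := fun n => Set.Ico (μ * 2 ^ n) (μ * 2 ^ (n+1)) ∩ Set.Ioc 0 1 with hs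
  have hsub : Set.Ioc μ 1 ⊆ ⋃ n, s n := by
    rintro x ⟨hx1, hx2⟩
    have h1 : 1 ≤ x / μ := le_of_lt ((one_lt_div hμ).2 hx1)
    obtain ⟨n, ha, hb⟩ := exists_nat_pow_near h1 (one_lt_two (α := ℝ))
    refine Set.mem_iUnion.2 ⟨n, ⟨⟨?_, ?_⟩, hμ.trans hx1, hx2⟩⟩
    · rw [mul_comm]; exact (le_div_iff₀ hμ).1 ha
    · rw [mul_comm]; exact (div_lt_iff₀ hμ).1 hb
  have term_bd : ∀ n : ℕ, ∫⁻ x in s n, ENNReal.ofReal (x ^ (-3:ℝ)) ∂e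
      ≤ (if n < N then ENNReal.ofReal (8 * K) else 0) := by
    intro n
    by_cases hn : n < N
    · rw [if_pos hn]
      have hlow : (0:ℝ) < μ * 2 ^ n := by positivity
      have hmin0 : (0:ℝ) < min (μ * 2 ^ (n+1)) 1 := lt_min (by positivity) one_pos
      have h1 : ∀ x ∈ s n, x ^ (-3:ℝ) ≤ (μ * 2 ^ n) ^ (-3:ℝ) := by
        intro x hx
        have hx0 : 0 < x := hx.2.1
        rw [Real.rpow_neg hx0.le, Real.rpow_neg hlow.le]
        exact inv_anti₀ (Real.rpow_pos_of_pos hlow 3)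
          (Real.rpow_le_rpow hlow.le hx.1.1 (by norm_num))
      have h2 : e (s n) ≤ ENNReal.ofReal (K * (μ * 2 ^ (n+1)) ^ (3:ℝ)) := by
        have hmono : s n ⊆ Set.Ioc 0 (min (μ * 2 ^ (n+1)) 1) :=
          fun x hx => ⟨hx.2.1, le_min hx.1.2.le hx.2.2⟩
        refine le_trans (measure_mono hmono) ?_
        refine le_trans (hbound _ hmin0 (min_le_right _ _)) ?_
        exact ENNReal.ofReal_le_ofReal (mul_le_mul_of_nonneg_left
          (Real.rpow_le_rpow hmin0.le (min_le_left _ _) (by norm_num)) hK)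
      calc ∫⁻ x in s n, ENNReal.ofReal (x ^ (-3:ℝ)) ∂e
          ≤ ENNReal.ofReal ((μ * 2 ^ n) ^ (-3:ℝ))
              * ENNReal.ofReal (K * (μ * 2 ^ (n+1)) ^ (3:ℝ)) :=
            piece_bound e (measurableSet_Ico.inter measurableSet_Ioc) h1 h2
        _ = ENNReal.ofReal ((μ * 2 ^ n) ^ (-3:ℝ) * (K * (μ * 2 ^ (n+1)) ^ (3:ℝ))) :=
            (ENNReal.ofReal_mul (by positivity)).symm
        _ = ENNReal.ofReal (8 * K) := by rw [keycalc_up3 K μ hμ n]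
    · rw [if_neg hn]
      have hempty : s n = ∅ := by
        rw [Set.eq_empty_iff_forall_notMem]
        rintro x ⟨⟨hxl, _⟩, _, hx1⟩
        have := hN n (le_of_not_gt hn)
        linarith
      rw [hempty]
      simp
  calc ∫⁻ x in Set.Ioc μ 1, ENNReal.ofReal (x ^ (-3:ℝ)) ∂e
      ≤ ∫⁻ x in ⋃ n, s n, ENNReal.ofReal (x ^ (-3:ℝ)) ∂e := lintegral_mono_set hsub
    _ ≤ ∑' n, ∫⁻ x in s n, ENNReal.ofReal (x ^ (-3:ℝ)) ∂e := lintegral_iUnion_le _ _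
    _ ≤ ∑' n : ℕ, (if n < N then ENNReal.ofReal (8 * K) else 0) :=
        ENNReal.tsum_le_tsum term_bd
    _ = ∑ n ∈ Finset.range N, (if n < N then ENNReal.ofReal (8 * K) else 0) :=
        tsum_eq_sum (by intro n hn; rw [if_neg (by simpa using hn)])
    _ = ENNReal.ofReal ((N : ℝ) * (8 * K)) := by
        rw [Finset.sum_ite_of_true (fun n hn => Finset.mem_range.1 hn), Finset.sum_const,
          Finset.card_range, nsmul_eq_mul, ← ENNReal.ofReal_natCast N,
          ← ENNReal.ofReal_mul (by positivity)]


set_option maxHeartbeats 2000000 in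
/-- from spectral-exponent bounds to systematic-error rates: if `e` is a
finite Borel measure on `(0,∞)` with `e((0,ν]) ≤ K ν^q` for all `ν ∈ (0,1]` (where
`K ≥ 0`, `q ≥ 2`), then there is a constant `C` (depending only on `K`, `q` and the total
mass of `e`) such that for all `0 < μ ≤ 1/2`,
`μ² ∫ (μ+λ)⁻² λ⁻¹ de(λ)` is at most `C μ^{q−1}` if `2 ≤ q < 3`, at most `C μ² log(1/μ)`
if `q = 3`, and at most `C μ²` if `q > 3`. -/
theorem statement13 (e : Measure ℝ) [IsFiniteMeasure e] (he : e (Set.Iic 0) = 0)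
    (K q : ℝ) (hK : 0 ≤ K) (hq : 2 ≤ q)
    (hbound : ∀ ν : ℝ, 0 < ν → ν ≤ 1 → e (Set.Ioc 0 ν) ≤ ENNReal.ofReal (K * ν ^ q)) :
    ∃ C : ℝ, 0 ≤ C ∧ ∀ μ : ℝ, 0 < μ → μ ≤ 1 / 2 →
      (q < 3 →
        ENNReal.ofReal (μ ^ 2) *
            ∫⁻ l in Set.Ioi (0 : ℝ), ENNReal.ofReal (((μ + l) ^ 2 * l)⁻¹) ∂e
          ≤ ENNReal.ofReal (C * μ ^ (q - 1))) ∧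
      (q = 3 →
        ENNReal.ofReal (μ ^ 2) *
            ∫⁻ l in Set.Ioi (0 : ℝ), ENNReal.ofReal (((μ + l) ^ 2 * l)⁻¹) ∂e
          ≤ ENNReal.ofReal (C * μ ^ 2 * Real.log (1 / μ))) ∧
      (3 < q →
        ENNReal.ofReal (μ ^ 2) *
            ∫⁻ l in Set.Ioi (0 : ℝ), ENNReal.ofReal (((μ + l) ^ 2 * l)⁻¹) ∂e
          ≤ ENNReal.ofReal (C * μ ^ 2)) := by
  have htot : e Set.univ ≠ ⊤ := measure_ne_top e _
  set M : ℝ := (e Set.univ).toReal with hM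
  have hM0 : 0 ≤ M := ENNReal.toReal_nonneg
  have heuniv : e Set.univ = ENNReal.ofReal M := (ENNReal.ofReal_toReal htot).symm
  set i1 : ℝ := (1 - (1/2 : ℝ) ^ (q - 1))⁻¹ with hi1def
  set i2 : ℝ := (1 - (1/2 : ℝ) ^ (3 - q))⁻¹ with hi2def
  set i3 : ℝ := (1 - (1/2 : ℝ) ^ (q - 3))⁻¹ with hi3def
  have hrpow_half : ∀ z : ℝ, 0 < z → (1/2 : ℝ) ^ z < 1 := fun z hz =>
    Real.rpow_lt_one (by norm_num) (by norm_num) hz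
  have hi1 : 0 ≤ i1 := inv_nonneg.2 (by linarith [hrpow_half (q - 1) (by linarith)])
  set C1 : ℝ := K * 2 * i1 + K * (2:ℝ) ^ q * i2 + M with hC1def
  set C2 : ℝ := (K * 2 * i1 + 24 * K + M) / Real.log 2 with hC2def
  set C3 : ℝ := K * (2:ℝ) ^ (3:ℝ) * i3 + M with hC3def
  refine ⟨max 0 (max C1 (max C2 C3)), le_max_left 0 _, fun μ hμ0 hμh => ?_⟩
  have hμ1 : μ ≤ 1 := by linarith
  have hμ2ne : (μ:ℝ) ^ 2 ≠ 0 := by positivity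
  have hpt3 : ∀ x : ℝ, 0 < x → ((μ + x) ^ 2 * x)⁻¹ ≤ x ^ (-3 : ℝ) := by
    intro x hx0
    have hx3 : (0:ℝ) < x ^ 3 := by positivity
    have h1 : x ^ 3 ≤ (μ + x) ^ 2 * x := by
      nlinarith [mul_nonneg (mul_nonneg hμ0.le hμ0.le) hx0.le,
        mul_nonneg (mul_nonneg hμ0.le hx0.le) hx0.le]
    have h2 : x ^ (-3 : ℝ) = (x ^ 3)⁻¹ := by
      rw [Real.rpow_neg hx0.le, show (3:ℝ) = ((3:ℕ):ℝ) by norm_num, Real.rpow_natCast]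
    rw [h2]
    exact inv_anti₀ hx3 h1
  have hpt1 : ∀ x : ℝ, 0 < x → ((μ + x) ^ 2 * x)⁻¹ ≤ (μ ^ 2)⁻¹ * x ^ (-1 : ℝ) := by
    intro x hx0
    have h2 : x ^ (-1 : ℝ) = x⁻¹ := by rw [Real.rpow_neg hx0.le, Real.rpow_one]
    rw [h2, mul_inv]
    exact mul_le_mul_of_nonneg_right
      (inv_anti₀ (by positivity) (by nlinarith)) (inv_nonneg.2 hx0.le)
  have hTC : ∫⁻ x in Set.Ioi (1:ℝ), ENNReal.ofReal (((μ + x) ^ 2 * x)⁻¹) ∂e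
      ≤ ENNReal.ofReal M := by
    have hB : e (Set.Ioi 1) ≤ ENNReal.ofReal M :=
      le_of_le_of_eq (measure_mono (Set.subset_univ _)) heuniv
    have h := piece_bound e measurableSet_Ioi (f := fun x => ((μ + x) ^ 2 * x)⁻¹) (c := 1)
      (fun x hx => by
        have hx1 : (1:ℝ) < x := hx
        exact inv_le_one_of_one_le₀ (by nlinarith))
      hB
    simpa using h
  set dA : ℝ := (K * μ ^ (q - 1) * (2:ℝ) ^ (1:ℝ)) * i1 with hdAdef
  have hdA0 : 0 ≤ dA := by
    apply mul_nonneg _ hi1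
    apply mul_nonneg (mul_nonneg hK (Real.rpow_nonneg hμ0.le _)) (Real.rpow_nonneg (by norm_num) _)
  have hTA : ∫⁻ x in Set.Ioc (0:ℝ) μ, ENNReal.ofReal (((μ + x) ^ 2 * x)⁻¹) ∂e
      ≤ ENNReal.ofReal ((μ ^ 2)⁻¹ * dA) := by
    calc ∫⁻ x in Set.Ioc (0:ℝ) μ, ENNReal.ofReal (((μ + x) ^ 2 * x)⁻¹) ∂e
        ≤ ∫⁻ x in Set.Ioc (0:ℝ) μ,
            ENNReal.ofReal ((μ ^ 2)⁻¹) * ENNReal.ofReal (x ^ (-1 : ℝ)) ∂e := by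
          apply setLIntegral_mono' measurableSet_Ioc
          intro x hx
          rw [← ENNReal.ofReal_mul (by positivity)]
          exact ENNReal.ofReal_le_ofReal (hpt1 x hx.1)
      _ = ENNReal.ofReal ((μ ^ 2)⁻¹)
            * ∫⁻ x in Set.Ioc (0:ℝ) μ, ENNReal.ofReal (x ^ (-1 : ℝ)) ∂e :=
          lintegral_const_mul' _ _ ENNReal.ofReal_ne_top
      _ ≤ ENNReal.ofReal ((μ ^ 2)⁻¹) * ENNReal.ofReal dA := by
          apply mul_le_mul_right
          have h := down_lemma e K q 1 hK zero_le_one (by linarith) hbound μ hμ0 hμ1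
          rw [hdAdef]
          convert h using 3 <;> norm_num
      _ = ENNReal.ofReal ((μ ^ 2)⁻¹ * dA) := (ENNReal.ofReal_mul (by positivity)).symm
  have hμ2rpow : μ ^ 2 = μ ^ (2:ℝ) := by
    rw [show (2:ℝ) = ((2:ℕ):ℝ) by norm_num, Real.rpow_natCast]
  refine ⟨?_, ?_, ?_⟩
  -- CASE q < 3
  · intro hq3
    have hi2 : 0 ≤ i2 := inv_nonneg.2 (by linarith [hrpow_half (3 - q) (by linarith)])
    set dB : ℝ := (K * (2:ℝ) ^ q * μ ^ (q - 3)) * i2 with hdBdef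
    have hdB0 : 0 ≤ dB := by
      apply mul_nonneg _ hi2
      exact mul_nonneg (mul_nonneg hK (Real.rpow_nonneg (by norm_num) _))
        (Real.rpow_nonneg hμ0.le _)
    have hTB : ∫⁻ x in Set.Ioc μ 1, ENNReal.ofReal (((μ + x) ^ 2 * x)⁻¹) ∂e
        ≤ ENNReal.ofReal dB := by
      calc ∫⁻ x in Set.Ioc μ 1, ENNReal.ofReal (((μ + x) ^ 2 * x)⁻¹) ∂e
          ≤ ∫⁻ x in Set.Ioc μ 1, ENNReal.ofReal (x ^ (-3 : ℝ)) ∂e :=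
            setLIntegral_mono' measurableSet_Ioc fun x hx =>
              ENNReal.ofReal_le_ofReal (hpt3 x (hμ0.trans hx.1))
        _ ≤ ENNReal.ofReal dB := up_lemma e K q hK (by linarith) hq3 hbound μ hμ0
    have hset : Set.Ioi (0:ℝ) = (Set.Ioc 0 μ ∪ Set.Ioc μ 1) ∪ Set.Ioi 1 := by
      rw [Set.Ioc_union_Ioc_eq_Ioc hμ0.le hμ1, Set.Ioc_union_Ioi_eq_Ioi zero_le_one]
    have hdisjU : Disjoint (Set.Ioc (0:ℝ) μ ∪ Set.Ioc μ 1) (Set.Ioi 1) := by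
      rw [Set.Ioc_union_Ioc_eq_Ioc hμ0.le hμ1]; exact Set.Ioc_disjoint_Ioi le_rfl
    have hdisj2 : Disjoint (Set.Ioc (0:ℝ) μ) (Set.Ioc μ 1) := by
      rw [Set.disjoint_left]; rintro x ⟨_, h1⟩ ⟨h2, _⟩; exact absurd h1 (not_le.2 h2)
    rw [hset, lintegral_union measurableSet_Ioi hdisjU,
      lintegral_union measurableSet_Ioc hdisj2]
    calc ENNReal.ofReal (μ ^ 2) * ((_ + _) + _)
        ≤ ENNReal.ofReal (μ ^ 2) * ((ENNReal.ofReal ((μ ^ 2)⁻¹ * dA) + ENNReal.ofReal dB)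
            + ENNReal.ofReal M) :=
          mul_le_mul_right (add_le_add (add_le_add hTA hTB) hTC) _
      _ = ENNReal.ofReal (μ ^ 2 * (((μ ^ 2)⁻¹ * dA + dB) + M)) := by
          rw [← ENNReal.ofReal_add (by positivity) hdB0,
            ← ENNReal.ofReal_add (by positivity) hM0,
            ← ENNReal.ofReal_mul (by positivity)]
      _ ≤ ENNReal.ofReal (max 0 (max C1 (max C2 C3)) * μ ^ (q - 1)) := by
          apply ENNReal.ofReal_le_ofReal
          have hinv : μ ^ 2 * (μ ^ 2)⁻¹ = 1 := mul_inv_cancel₀ hμ2ne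
          have hexp : μ ^ 2 * (((μ ^ 2)⁻¹ * dA + dB) + M) = dA + μ ^ 2 * dB + μ ^ 2 * M := by
            linear_combination dA * hinv
          have hp2 : μ ^ (2:ℝ) * μ ^ (q - 3) = μ ^ (q - 1) := by
            rw [← Real.rpow_add hμ0]; ring_nf
          have hp3 : μ ^ (2:ℝ) ≤ μ ^ (q - 1) :=
            Real.rpow_le_rpow_of_exponent_ge hμ0 hμ1 (by linarith)
          have hq1pow : 0 ≤ μ ^ (q - 1) := Real.rpow_nonneg hμ0.le _
          have h1 : dA = K * 2 * i1 * μ ^ (q - 1) := by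
            rw [hdAdef, Real.rpow_one]; ring
          have h2 : μ ^ 2 * dB = K * (2:ℝ) ^ q * i2 * μ ^ (q - 1) := by
            rw [hdBdef, hμ2rpow]; linear_combination (K * (2:ℝ) ^ q * i2) * hp2
          have h3 : μ ^ 2 * M ≤ μ ^ (q - 1) * M := by
            rw [hμ2rpow]; exact mul_le_mul_of_nonneg_right hp3 hM0
          have hCle : C1 ≤ max 0 (max C1 (max C2 C3)) :=
            le_trans (le_max_left _ _) (le_max_right 0 _)
          have : dA + μ ^ 2 * dB + μ ^ 2 * M ≤ C1 * μ ^ (q - 1) := by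
            rw [hC1def]; nlinarith [h1, h2, h3]
          calc μ ^ 2 * (((μ ^ 2)⁻¹ * dA + dB) + M) = dA + μ ^ 2 * dB + μ ^ 2 * M := hexp
            _ ≤ C1 * μ ^ (q - 1) := this
            _ ≤ max 0 (max C1 (max C2 C3)) * μ ^ (q - 1) :=
              mul_le_mul_of_nonneg_right hCle hq1pow
  -- CASE q = 3
  · intro hq3
    subst hq3
    set N : ℕ := ⌈Real.logb 2 μ⁻¹⌉₊ + 1 with hNdef
    have hlog2 : 0 < Real.log 2 := Real.log_pos one_lt_two
    have hinv2 : (2:ℝ) ≤ μ⁻¹ := by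
      rw [show (2:ℝ) = (1/2 : ℝ)⁻¹ by norm_num]
      exact inv_anti₀ hμ0 hμh
    have hloginv : Real.log 2 ≤ Real.log μ⁻¹ := Real.log_le_log two_pos hinv2
    have hlb1 : 1 ≤ Real.logb 2 μ⁻¹ := by
      rw [Real.logb, le_div_iff₀ hlog2]; linarith
    have hN2 : μ⁻¹ ≤ 2 ^ (⌈Real.logb 2 μ⁻¹⌉₊ : ℕ) := by
      have h := Real.rpow_le_rpow_of_exponent_le one_le_two (Nat.le_ceil (Real.logb 2 μ⁻¹))
      rw [Real.rpow_natCast] at h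
      calc μ⁻¹ = 2 ^ Real.logb 2 μ⁻¹ :=
            (Real.rpow_logb two_pos (by norm_num) (inv_pos.2 hμ0)).symm
        _ ≤ _ := h
    have hN : ∀ n, N ≤ n → 1 < μ * 2 ^ n := by
      intro n hn
      have h1 : (1:ℝ) ≤ μ * 2 ^ ⌈Real.logb 2 μ⁻¹⌉₊ := by
        have h := mul_le_mul_of_nonneg_left hN2 hμ0.le
        rwa [mul_inv_cancel₀ hμ0.ne'] at h
      have h2 : (2:ℝ) ^ N ≤ 2 ^ n := pow_le_pow_right₀ one_le_two hn
      have h3 : (2:ℝ) ^ N = 2 ^ ⌈Real.logb 2 μ⁻¹⌉₊ * 2 := pow_succ 2 _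
      nlinarith [mul_le_mul_of_nonneg_left h2 hμ0.le]
    have hNle : (N : ℝ) * Real.log 2 ≤ 3 * Real.log (1/μ) := by
      have hceil : (⌈Real.logb 2 μ⁻¹⌉₊ : ℝ) < Real.logb 2 μ⁻¹ + 1 :=
        Nat.ceil_lt_add_one (by linarith)
      have hNc : (N : ℝ) ≤ 3 * Real.logb 2 μ⁻¹ := by
        push_cast [hNdef]; linarith
      have hlogbL : Real.logb 2 μ⁻¹ * Real.log 2 = Real.log μ⁻¹ := by
        rw [Real.logb]; field_simp
      have hlog1μ : Real.log (1/μ) = Real.log μ⁻¹ := by rw [one_div]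
      rw [hlog1μ, ← hlogbL]
      nlinarith [hlog2.le]
    have hTB : ∫⁻ x in Set.Ioc μ 1, ENNReal.ofReal (((μ + x) ^ 2 * x)⁻¹) ∂e
        ≤ ENNReal.ofReal ((N : ℝ) * (8 * K)) := by
      calc ∫⁻ x in Set.Ioc μ 1, ENNReal.ofReal (((μ + x) ^ 2 * x)⁻¹) ∂e
          ≤ ∫⁻ x in Set.Ioc μ 1, ENNReal.ofReal (x ^ (-3 : ℝ)) ∂e :=
            setLIntegral_mono' measurableSet_Ioc fun x hx =>
              ENNReal.ofReal_le_ofReal (hpt3 x (hμ0.trans hx.1))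
        _ ≤ ENNReal.ofReal ((N : ℝ) * (8 * K)) := up3_lemma e K hK hbound μ hμ0 N hN
    have hset : Set.Ioi (0:ℝ) = (Set.Ioc 0 μ ∪ Set.Ioc μ 1) ∪ Set.Ioi 1 := by
      rw [Set.Ioc_union_Ioc_eq_Ioc hμ0.le hμ1, Set.Ioc_union_Ioi_eq_Ioi zero_le_one]
    have hdisjU : Disjoint (Set.Ioc (0:ℝ) μ ∪ Set.Ioc μ 1) (Set.Ioi 1) := by
      rw [Set.Ioc_union_Ioc_eq_Ioc hμ0.le hμ1]; exact Set.Ioc_disjoint_Ioi le_rfl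
    have hdisj2 : Disjoint (Set.Ioc (0:ℝ) μ) (Set.Ioc μ 1) := by
      rw [Set.disjoint_left]; rintro x ⟨_, h1⟩ ⟨h2, _⟩; exact absurd h1 (not_le.2 h2)
    rw [hset, lintegral_union measurableSet_Ioi hdisjU,
      lintegral_union measurableSet_Ioc hdisj2]
    calc ENNReal.ofReal (μ ^ 2) * ((_ + _) + _)
        ≤ ENNReal.ofReal (μ ^ 2) * ((ENNReal.ofReal ((μ ^ 2)⁻¹ * dA)
            + ENNReal.ofReal ((N : ℝ) * (8 * K))) + ENNReal.ofReal M) :=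
          mul_le_mul_right (add_le_add (add_le_add hTA hTB) hTC) _
      _ = ENNReal.ofReal (μ ^ 2 * (((μ ^ 2)⁻¹ * dA + (N : ℝ) * (8 * K)) + M)) := by
          rw [← ENNReal.ofReal_add (by positivity) (by positivity),
            ← ENNReal.ofReal_add (by positivity) hM0,
            ← ENNReal.ofReal_mul (by positivity)]
      _ ≤ ENNReal.ofReal (max 0 (max C1 (max C2 C3)) * μ ^ 2 * Real.log (1/μ)) := by
          apply ENNReal.ofReal_le_ofReal
          have hinv : μ ^ 2 * (μ ^ 2)⁻¹ = 1 := mul_inv_cancel₀ hμ2ne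
          have hexp : μ ^ 2 * (((μ ^ 2)⁻¹ * dA + (N : ℝ) * (8 * K)) + M)
              = dA + (N : ℝ) * (8 * K) * μ ^ 2 + M * μ ^ 2 := by
            linear_combination dA * hinv
          have hdA2 : dA = K * 2 * i1 * μ ^ 2 := by
            rw [hdAdef, Real.rpow_one, hμ2rpow,
              show (3:ℝ) - 1 = (2:ℝ) by norm_num]
            ring
          have hL : Real.log 2 ≤ Real.log (1/μ) := by rw [one_div]; exact hloginv
          have hL0 : 0 < Real.log (1/μ) := lt_of_lt_of_le hlog2 hL
          have hCle : C2 ≤ max 0 (max C1 (max C2 C3)) :=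
            le_trans (le_trans (le_max_left _ _) (le_max_right _ _)) (le_max_right 0 _)
          have hmain : dA + (N : ℝ) * (8 * K) * μ ^ 2 + M * μ ^ 2
              ≤ C2 * μ ^ 2 * Real.log (1/μ) := by
            rw [hC2def, div_mul_eq_mul_div, div_mul_eq_mul_div, le_div_iff₀ hlog2]
            have t1 := mul_le_mul_of_nonneg_left hL
              (show (0:ℝ) ≤ K * 2 * i1 * μ ^ 2 by positivity)
            have t2 := mul_le_mul_of_nonneg_left hNle
              (show (0:ℝ) ≤ 8 * K * μ ^ 2 by positivity)
            have t3 := mul_le_mul_of_nonneg_left hL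
              (show (0:ℝ) ≤ M * μ ^ 2 by positivity)
            rw [hdA2]
            nlinarith [t1, t2, t3]
          have h2 : C2 * μ ^ 2 * Real.log (1/μ)
              ≤ max 0 (max C1 (max C2 C3)) * μ ^ 2 * Real.log (1/μ) := by
            apply mul_le_mul_of_nonneg_right _ hL0.le
            exact mul_le_mul_of_nonneg_right hCle (by positivity)
          linarith [hexp.le, hmain, h2, hexp.ge]
  -- CASE 3 < q
  · intro hq3
    have hi3 : 0 ≤ i3 := inv_nonneg.2 (by linarith [hrpow_half (q - 3) (by linarith)])
    set d3 : ℝ := (K * (1:ℝ) ^ (q - 3) * (2:ℝ) ^ (3:ℝ)) * i3 with hd3def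
    have hT01 : ∫⁻ x in Set.Ioc (0:ℝ) 1, ENNReal.ofReal (((μ + x) ^ 2 * x)⁻¹) ∂e
        ≤ ENNReal.ofReal d3 := by
      calc ∫⁻ x in Set.Ioc (0:ℝ) 1, ENNReal.ofReal (((μ + x) ^ 2 * x)⁻¹) ∂e
          ≤ ∫⁻ x in Set.Ioc (0:ℝ) 1, ENNReal.ofReal (x ^ (-3 : ℝ)) ∂e :=
            setLIntegral_mono' measurableSet_Ioc fun x hx =>
              ENNReal.ofReal_le_ofReal (hpt3 x hx.1)
        _ ≤ ENNReal.ofReal d3 :=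
            down_lemma e K q 3 hK (by norm_num) hq3 hbound 1 one_pos le_rfl
    have hd30 : 0 ≤ d3 := by
      apply mul_nonneg _ hi3
      refine mul_nonneg (mul_nonneg hK ?_) (Real.rpow_nonneg (by norm_num) _)
      rw [Real.one_rpow]; exact zero_le_one
    have hset : Set.Ioi (0:ℝ) = Set.Ioc 0 1 ∪ Set.Ioi 1 :=
      (Set.Ioc_union_Ioi_eq_Ioi zero_le_one).symm
    rw [hset, lintegral_union measurableSet_Ioi (Set.Ioc_disjoint_Ioi le_rfl)]
    calc ENNReal.ofReal (μ ^ 2) * (_ + _)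
        ≤ ENNReal.ofReal (μ ^ 2) * (ENNReal.ofReal d3 + ENNReal.ofReal M) :=
          mul_le_mul_right (add_le_add hT01 hTC) _
      _ = ENNReal.ofReal (μ ^ 2 * (d3 + M)) := by
          rw [← ENNReal.ofReal_add hd30 hM0, ← ENNReal.ofReal_mul (by positivity)]
      _ ≤ ENNReal.ofReal (max 0 (max C1 (max C2 C3)) * μ ^ 2) := by
          apply ENNReal.ofReal_le_ofReal
          have hCle : C3 ≤ max 0 (max C1 (max C2 C3)) :=
            le_trans (le_trans (le_max_right _ _) (le_max_right _ _)) (le_max_right 0 _)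
          have hd3C : d3 + M ≤ C3 := by
            rw [hd3def, hC3def, Real.one_rpow]; nlinarith
          nlinarith [sq_nonneg μ, hd3C, hCle]
end
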